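/- If the degeneracy of a graph H rooted at an independent set R ⊆ V(H) is at most d ≥ 1, then the maximum rooted 2-density satisfies m₂(H,R) ≤ d. -/

import Mathlib

open Finset

variable {V : Type} [Fintype V]

lemma aux_key (H : SimpleGraph V) (R : Set V) (G : H.Subgraph) (σ : V → ℕ)
    (hinj : ∀ v w, v ∉ R → w ∉ R → σ v = σ w → v = w)
    (hindep : ∀ u ∈ R, ∀ v ∈ R, ¬H.Adj u v) :
    G.edgeSet.ncard ≤ ∑ v ∈ (Set.toFinite (G.verts \ R)).toFinset,
      ({w | G.Adj v w ∧ (w ∈ R ∨ σ w < σ v)} : Set V).ncard := by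
  classical
  set P : Set (V × V) := {p | p.1 ∉ R ∧ G.Adj p.1 p.2 ∧ (p.2 ∈ R ∨ σ p.2 < σ p.1)} with hP
  have hsub : G.edgeSet ⊆ (fun p : V × V => s(p.1, p.2)) '' P := by
    intro e he
    induction e using Sym2.ind with
    | _ v w =>
      rw [SimpleGraph.Subgraph.mem_edgeSet] at he
      have hvw : v ≠ w := he.ne
      by_cases hv : v ∈ R
      · by_cases hw : w ∈ R
        · exact absurd he.adj_sub (hindep v hv w hw)
        · exact ⟨(w, v), ⟨hw, he.symm, Or.inl hv⟩, Sym2.eq_swap⟩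
      · by_cases hw : w ∈ R
        · exact ⟨(v, w), ⟨hv, he, Or.inl hw⟩, rfl⟩
        · have hne : σ v ≠ σ w := fun h => hvw (hinj v w hv hw h)
          rcases hne.lt_or_gt with h | h
          · exact ⟨(w, v), ⟨hw, he.symm, Or.inr h⟩, Sym2.eq_swap⟩
          · exact ⟨(v, w), ⟨hv, he, Or.inr h⟩, rfl⟩
  have h1 : G.edgeSet.ncard ≤ P.ncard := by
    calc G.edgeSet.ncard ≤ ((fun p : V × V => s(p.1, p.2)) '' P).ncard :=
          Set.ncard_le_ncard hsub (Set.toFinite _)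
      _ ≤ P.ncard := Set.ncard_image_le (Set.toFinite _)
  refine h1.trans ?_
  rw [Set.ncard_eq_toFinset_card' P]
  rw [Finset.card_eq_sum_card_fiberwise (f := Prod.fst)
    (t := (Set.toFinite (G.verts \ R)).toFinset) ?_]
  · apply Finset.sum_le_sum
    intro v hv
    rw [Set.ncard_eq_toFinset_card']
    apply Finset.card_le_card_of_injOn Prod.snd
    · intro p hp
      simp only [Finset.mem_coe, Finset.mem_filter, Set.mem_toFinset, hP, Set.mem_setOf_eq] at hp
      obtain ⟨⟨h1, h2, h3⟩, h4⟩ := hp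
      rw [h4] at h2 h3
      simp only [Finset.mem_coe, Set.mem_toFinset, Set.mem_setOf_eq]
      exact ⟨h2, h3⟩
    · intro p hp q hq h
      simp only [coe_filter, Set.mem_setOf_eq] at hp hq
      exact Prod.ext (hp.2.trans hq.2.symm) h
  · intro p hp
    simp only [Finset.mem_coe, Set.mem_toFinset, hP, Set.mem_setOf_eq] at hp
    simp only [Finset.mem_coe, Set.Finite.mem_toFinset, Set.mem_diff]
    exact ⟨hp.2.1.fst_mem, hp.1⟩


/-- The maximum rooted density `m(H,R)`. -/
noncomputable def rootedDensity (H : SimpleGraph V) (R : Set V) : ℝ :=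
  sSup {x : ℝ | ∃ H' : H.Subgraph, (H'.verts \ R).Nonempty ∧
    x = (H'.edgeSet.ncard : ℝ) / ((H'.verts \ R).ncard : ℝ)}

/-- The maximum 2-density `m₂(H)`. -/
noncomputable def density2 (H : SimpleGraph V) : ℝ :=
  sSup {x : ℝ | ∃ H' : H.Subgraph, 3 ≤ H'.verts.ncard ∧
    x = ((H'.edgeSet.ncard : ℝ) - 1) / ((H'.verts.ncard : ℝ) - 2)}

/-- The maximum rooted 2-density `m₂(H,R) := max { m(H,R), m₂(H) }`. -/
noncomputable def rootedDensity2 (H : SimpleGraph V) (R : Set V) : ℝ :=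
  max (rootedDensity H R) (density2 H)

/-- The degeneracy of `H` rooted at `U` is at most `d`: there is an ordering
(encoded by an injective labelling `σ` of the non-root vertices) such that each
non-root vertex has at most `d` neighbours among `U` and the earlier vertices. -/
def RootedDegeneracyLE (H : SimpleGraph V) (U : Set V) (d : ℕ) : Prop :=
  ∃ σ : V → ℕ, (∀ v w, v ∉ U → w ∉ U → σ v = σ w → v = w) ∧
    ∀ v, v ∉ U → ({w | H.Adj v w ∧ (w ∈ U ∨ σ w < σ v)} : Set V).ncard ≤ d

/-- If the degeneracy of a graph `H` rooted at an independent set `R` is at most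
`d ≥ 1`, then `m₂(H,R) ≤ d`. -/
theorem rootedDensity2_le_of_rootedDegeneracy (H : SimpleGraph V) (R : Set V) (d : ℕ)
    (hindep : ∀ u ∈ R, ∀ v ∈ R, ¬H.Adj u v)
    (hd : 1 ≤ d) (hdeg : RootedDegeneracyLE H R d) :
    rootedDensity2 H R ≤ (d : ℝ) := by
  classical
  obtain ⟨σ, hinj, hbound⟩ := hdeg
  have hd0 : (0:ℝ) ≤ d := Nat.cast_nonneg d
  have hCd : ∀ (G : H.Subgraph), ∀ v, v ∉ R →
      ({w | G.Adj v w ∧ (w ∈ R ∨ σ w < σ v)} : Set V).ncard ≤ d := by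
    intro G v hv
    refine le_trans (Set.ncard_le_ncard ?_ (Set.toFinite _)) (hbound v hv)
    rintro w ⟨h1, h2⟩
    exact ⟨h1.adj_sub, h2⟩
  -- PART 1
  have part1 : ∀ (G : H.Subgraph), (G.verts \ R).Nonempty →
      (G.edgeSet.ncard : ℝ) / ((G.verts \ R).ncard : ℝ) ≤ d := by
    intro G hne
    have hfin : (G.verts \ R).Finite := Set.toFinite _
    have hTcard : hfin.toFinset.card = (G.verts \ R).ncard :=
      (Set.ncard_eq_toFinset_card _ hfin).symm
    have he : G.edgeSet.ncard ≤ (G.verts \ R).ncard * d := by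
      refine le_trans (aux_key H R G σ hinj hindep) ?_
      rw [← hTcard]
      refine Finset.sum_le_card_nsmul _ _ d ?_
      intro v hv
      rw [Set.Finite.mem_toFinset] at hv
      exact hCd G v hv.2
    have hk : 0 < (G.verts \ R).ncard := (Set.ncard_pos hfin).mpr hne
    rw [div_le_iff₀ (by exact_mod_cast hk)]
    have : ((G.verts \ R).ncard * d : ℕ) = ((G.verts \ R).ncard : ℝ) * d := by push_cast; ring
    calc (G.edgeSet.ncard : ℝ) ≤ (((G.verts \ R).ncard * d : ℕ) : ℝ) := by exact_mod_cast he
      _ = (d : ℝ) * ((G.verts \ R).ncard : ℝ) := by push_cast; ring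
  -- PART 2 claim
  have part2 : ∀ (G : H.Subgraph), 3 ≤ G.verts.ncard →
      G.edgeSet.ncard ≤ d * (G.verts.ncard - 2) + 1 := by
    intro G hn
    set n := G.verts.ncard with hndef
    set k := (G.verts \ R).ncard with hkdef
    set r := (G.verts ∩ R).ncard with hrdef
    have hkr : r + k = n := Set.ncard_inter_add_ncard_diff_eq_ncard _ _ (Set.toFinite _)
    have hfin : (G.verts \ R).Finite := Set.toFinite _
    have hTcard : hfin.toFinset.card = k := (Set.ncard_eq_toFinset_card _ hfin).symm
    set f : V → ℕ := fun v => ({w | G.Adj v w ∧ (w ∈ R ∨ σ w < σ v)} : Set V).ncard with hf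
    have hsum : G.edgeSet.ncard ≤ ∑ v ∈ hfin.toFinset, f v := aux_key H R G σ hinj hindep
    have hfd : ∀ v ∈ hfin.toFinset, f v ≤ d := by
      intro v hv
      rw [Set.Finite.mem_toFinset] at hv
      exact hCd G v hv.2
    rcases Nat.lt_or_ge r 2 with hr | hr
    · -- r ≤ 1 : use minimal vertices
      have hk2 : 2 ≤ k := by omega
      have hTne : hfin.toFinset.Nonempty := by
        rw [← Finset.card_pos, hTcard]; omega
      obtain ⟨v₁, hv₁T, hv₁min⟩ := hfin.toFinset.exists_min_image σ hTne
      have hT'ne : (hfin.toFinset.erase v₁).Nonempty := by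
        rw [← Finset.card_pos, Finset.card_erase_of_mem hv₁T, hTcard]; omega
      obtain ⟨v₂, hv₂T, hv₂min⟩ := (hfin.toFinset.erase v₁).exists_min_image σ hT'ne
      -- f v₁ ≤ r
      have hfv₁ : f v₁ ≤ r := by
        refine le_trans (Set.ncard_le_ncard ?_ (Set.toFinite _)) le_rfl
        rintro w ⟨hadj, hcond⟩
        by_cases hwR : w ∈ R
        · exact ⟨hadj.snd_mem, hwR⟩
        · exfalso
          rcases hcond with h | h
          · exact hwR h
          · have hwT : w ∈ hfin.toFinset := by
              rw [Set.Finite.mem_toFinset]; exact ⟨hadj.snd_mem, hwR⟩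
            exact absurd h (not_lt.mpr (hv₁min w hwT))
      -- f v₂ ≤ r + 1
      have hfv₂ : f v₂ ≤ r + 1 := by
        have hsub2 : ({w | G.Adj v₂ w ∧ (w ∈ R ∨ σ w < σ v₂)} : Set V)
            ⊆ (G.verts ∩ R) ∪ {v₁} := by
          rintro w ⟨hadj, hcond⟩
          by_cases hwR : w ∈ R
          · exact Or.inl ⟨hadj.snd_mem, hwR⟩
          · rcases hcond with h | h
            · exact absurd h hwR
            · by_cases hwv : w = v₁
              · exact Or.inr (by simp [hwv])
              · exfalso
                have hwT : w ∈ hfin.toFinset.erase v₁ := by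
                  rw [Finset.mem_erase, Set.Finite.mem_toFinset]
                  exact ⟨hwv, hadj.snd_mem, hwR⟩
                exact absurd h (not_lt.mpr (hv₂min w hwT))
        calc f v₂ ≤ ((G.verts ∩ R) ∪ {v₁} : Set V).ncard :=
              Set.ncard_le_ncard hsub2 (Set.toFinite _)
          _ ≤ (G.verts ∩ R).ncard + ({v₁} : Set V).ncard := Set.ncard_union_le _ _
          _ = r + 1 := by rw [Set.ncard_singleton]
      have hfv₂d : f v₂ ≤ d := hfd v₂ (Finset.mem_of_mem_erase hv₂T)
      -- decompose the sum
      have hdec : ∑ v ∈ hfin.toFinset, f v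
          = f v₁ + (f v₂ + ∑ v ∈ (hfin.toFinset.erase v₁).erase v₂, f v) := by
        rw [Finset.add_sum_erase _ f hv₂T, Finset.add_sum_erase _ f hv₁T]
      have hrest : ∑ v ∈ (hfin.toFinset.erase v₁).erase v₂, f v ≤ (k - 2) * d := by
        have hc : ((hfin.toFinset.erase v₁).erase v₂).card = k - 2 := by
          rw [Finset.card_erase_of_mem hv₂T, Finset.card_erase_of_mem hv₁T, hTcard]; omega
        rw [← hc]
        refine Finset.sum_le_card_nsmul _ _ d ?_
        intro v hv
        exact hfd v (Finset.mem_of_mem_erase (Finset.mem_of_mem_erase hv))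
      have he : G.edgeSet.ncard ≤ f v₁ + f v₂ + (k - 2) * d := by
        rw [hdec] at hsum; omega
      -- conclude by case on r
      interval_cases r
      · -- r = 0
        have h0 : f v₁ = 0 := by omega
        have hn2 : n - 2 = k - 2 := by omega
        rw [hn2, mul_comm]
        omega
      · -- r = 1
        have hn2 : n - 2 = (k - 2) + 1 := by omega
        rw [hn2, Nat.mul_add, mul_comm]
        omega
    · -- r ≥ 2
      have hk2 : k ≤ n - 2 := by omega
      have he : G.edgeSet.ncard ≤ k * d := by
        refine le_trans hsum ?_
        rw [← hTcard]
        exact Finset.sum_le_card_nsmul _ _ d hfd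
      calc G.edgeSet.ncard ≤ k * d := he
        _ ≤ (n - 2) * d := Nat.mul_le_mul_right d hk2
        _ ≤ d * (n - 2) + 1 := by rw [mul_comm]; omega
  rw [rootedDensity2, max_le_iff]
  constructor
  · apply Real.sSup_le _ hd0
    rintro x ⟨G, hne, rfl⟩
    exact part1 G hne
  · apply Real.sSup_le _ hd0
    rintro x ⟨G, hn, rfl⟩
    have hcl := part2 G hn
    have hn2 : 2 ≤ G.verts.ncard := by omega
    have h3 : (3:ℝ) ≤ (G.verts.ncard:ℝ) := by exact_mod_cast hn
    have hpos : (0:ℝ) < (G.verts.ncard:ℝ) - 2 := by linarith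
    rw [div_le_iff₀ hpos]
    have hcast : (G.edgeSet.ncard:ℝ) ≤ (d:ℝ) * ((G.verts.ncard:ℝ) - 2) + 1 := by
      calc (G.edgeSet.ncard:ℝ) ≤ ((d * (G.verts.ncard - 2) + 1 : ℕ):ℝ) := by exact_mod_cast hcl
        _ = (d:ℝ) * ((G.verts.ncard:ℝ) - 2) + 1 := by
            push_cast [Nat.cast_sub hn2]; ring
    linarith
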